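/- arXiv:1304.6244 — 5 statements merged into one kernel-verified Lean document; each statement's English description precedes it below -/
import Mathlib

section
/- The Galois numbers satisfy the Goldman-Rota recurrence G_q(n+1) = 2·G_q(n) + (q^n − 1)·G_q(n−1) for n ≥ 1, with G_q(0) = 1 and G_q(1) = 2. -/
/-- The Gaussian (q-)binomial coefficient, defined by the q-Pascal recursion. -/
def gaussBinom (q : ℕ) : ℕ → ℕ → ℕ
  | _, 0 => 1
  | 0, _ + 1 => 0
  | n + 1, k + 1 => gaussBinom q n k + q ^ (k + 1) * gaussBinom q n (k + 1)

/-- The Galois number `G_q(n)`: the total number of subspaces of an `n`-dimensional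
vector space over `F_q`. -/
def galoisNumber (q n : ℕ) : ℕ := ∑ k ∈ Finset.range (n + 1), gaussBinom q n k

lemma gb_succ_succ (q n k : ℕ) :
    gaussBinom q (n+1) (k+1) = gaussBinom q n k + q ^ (k + 1) * gaussBinom q n (k + 1) := rfl

lemma gb_zero' (q n : ℕ) : gaussBinom q n 0 = 1 := by cases n <;> rfl

lemma gb_zero_of_lt (q : ℕ) : ∀ n k, n < k → gaussBinom q n k = 0 := by
  intro n
  induction n with
  | zero =>
    intro k hk
    cases k with
    | zero => omega
    | succ k => rfl
  | succ n ih =>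
    intro k hk
    cases k with
    | zero => omega
    | succ k =>
      rw [gb_succ_succ, ih k (by omega), ih (k+1) (by omega), mul_zero, add_zero]

lemma gb_one (q : ℕ) : ∀ n, q * gaussBinom q n 1 + 1 = gaussBinom q n 1 + q ^ n := by
  intro n
  induction n with
  | zero => simp [gaussBinom]
  | succ n ih =>
    rw [show (1:ℕ) = 0 + 1 from rfl, gb_succ_succ, gb_zero']
    simp only [zero_add, pow_one, pow_succ] at *
    nlinarith [ih]

lemma gb_pascal2 (q : ℕ) : ∀ n k, gaussBinom q (n+1) (k+1)
    = q ^ (n - k) * gaussBinom q n k + gaussBinom q n (k+1) := by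
  intro n
  induction n with
  | zero =>
    intro k
    cases k with
    | zero => simp [gaussBinom]
    | succ k => simp [gaussBinom]
  | succ n ih =>
    intro k
    cases k with
    | zero =>
      rw [gb_succ_succ q (n+1) 0, gb_zero', Nat.sub_zero, mul_one]
      have h1 := gb_one q (n+1)
      simp only [zero_add, pow_one] at *
      linarith [h1]
    | succ k =>
      have he : n + 1 - (k + 1) = n - k := by omega
      rw [he, gb_succ_succ q (n+1) (k+1)]
      by_cases hk : k + 1 ≤ n
      · nth_rewrite 1 [ih k]
        nth_rewrite 1 [ih (k+1)]
        rw [gb_succ_succ q n k, gb_succ_succ q n (k+1)]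
        simp only [mul_add, ← mul_assoc, ← pow_add]
        have h1 : k + 1 + 1 + (n - (k+1)) = n + 1 := by omega
        have h2 : n - k + (k + 1) = n + 1 := by omega
        rw [h1, h2]
        ring
      · have z3 : gaussBinom q (n+1) (k+1+1) = 0 := gb_zero_of_lt q (n+1) (k+2) (by omega)
        have hn0 : n - k = 0 := by omega
        rw [z3, hn0]
        simp
  -- done

def gS (q n : ℕ) : ℕ := ∑ k ∈ Finset.range (n + 1), q ^ k * gaussBinom q n k

lemma sub_sum (q n : ℕ) :
    (∑ k ∈ Finset.range (n + 1), q ^ (k+1) * gaussBinom q n (k+1)) + 1 = gS q n := by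
  have h : ∑ k ∈ Finset.range (n + 2), q ^ k * gaussBinom q n k = gS q n := by
    rw [Finset.sum_range_succ, gb_zero_of_lt q n (n+1) (by omega), mul_zero, add_zero, gS]
  rw [← h]
  conv_rhs => rw [Finset.sum_range_succ']
  simp [gb_zero']

lemma G_succ (q n : ℕ) : galoisNumber q (n+1) = galoisNumber q n + gS q n := by
  have e : galoisNumber q (n+1)
      = (∑ k ∈ Finset.range (n+1), gaussBinom q (n+1) (k+1)) + gaussBinom q (n+1) 0 := by
    rw [galoisNumber, Finset.sum_range_succ']
  rw [e, gb_zero']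
  simp only [gb_succ_succ, Finset.sum_add_distrib]
  rw [galoisNumber, add_assoc, sub_sum]

lemma S_succ (q n : ℕ) : gS q (n+1) = q ^ (n+1) * galoisNumber q n + gS q n := by
  have e : gS q (n+1)
      = (∑ k ∈ Finset.range (n+1), q ^ (k+1) * gaussBinom q (n+1) (k+1))
        + q ^ 0 * gaussBinom q (n+1) 0 := by
    rw [gS, Finset.sum_range_succ']
  rw [e, gb_zero', pow_zero, mul_one]
  have e2 : ∑ k ∈ Finset.range (n+1), q ^ (k+1) * gaussBinom q (n+1) (k+1)
      = ∑ k ∈ Finset.range (n+1),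
          (q ^ (n+1) * gaussBinom q n k + q ^ (k+1) * gaussBinom q n (k+1)) := by
    apply Finset.sum_congr rfl
    intro k hk
    rw [Finset.mem_range] at hk
    rw [gb_pascal2, mul_add, ← mul_assoc, ← pow_add]
    congr 3
    omega
  rw [e2, Finset.sum_add_distrib, ← Finset.mul_sum]
  rw [galoisNumber, add_assoc, sub_sum]

/-- Goldman-Rota recurrence: `G_q(n+1) = 2 G_q(n) + (q^n - 1) G_q(n-1)` for `n ≥ 1`,
with `G_q(0) = 1` and `G_q(1) = 2`. -/
theorem galoisNumber_goldman_rota (q n : ℕ) (hq : IsPrimePow q) (hn : 1 ≤ n) :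
    (galoisNumber q (n + 1) : ℤ) =
        2 * (galoisNumber q n : ℤ) + ((q : ℤ) ^ n - 1) * (galoisNumber q (n - 1) : ℤ) ∧
      galoisNumber q 0 = 1 ∧ galoisNumber q 1 = 2 := by
  refine ⟨?_, by simp [galoisNumber, gaussBinom, Finset.sum_range_succ], by
    simp [galoisNumber, gaussBinom, Finset.sum_range_succ]⟩
  obtain ⟨m, rfl⟩ := Nat.exists_eq_add_of_le hn
  have hms : 1 + m = m + 1 := by omega
  rw [hms]
  simp only [Nat.add_sub_cancel]
  have t1 := congrArg (Nat.cast : ℕ → ℤ) (G_succ q (m+1))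
  have t2 := congrArg (Nat.cast : ℕ → ℤ) (S_succ q m)
  have t3 := congrArg (Nat.cast : ℕ → ℤ) (G_succ q m)
  push_cast at t1 t2 t3 ⊢
  rw [t1, t2]
  linarith [t3]
end

section
/- Under the natural action of H(n+1,q) on subspaces of F_q^{n+1}, the orbit of a subspace X ⊄ F_q^n is exactly the set of subspaces Y ⊄ F_q^n with Y ∩ F_q^n = X ∩ F_q^n; in particular, if dim X = k, the orbit has size q^{n+1−k}. -/
/-- The matrix `[[I, a], [0, 1]]` over `F`, indexed by `Fin n ⊕ Unit`. -/
def Hmat {F : Type} [Field F] {n : ℕ} (a : Fin n → F) :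
    Matrix (Fin n ⊕ Unit) (Fin n ⊕ Unit) F :=
  Matrix.fromBlocks 1 (Matrix.of fun i (_ : Unit) => a i) 0 1

/-- The action of the element `[[I, a], [0, 1]]` of `H(n+1, q)` on subspaces of
`F_q^{n+1}`. -/
def actH {F : Type} [Field F] {n : ℕ} (a : Fin n → F)
    (X : Submodule F (Fin n ⊕ Unit → F)) : Submodule F (Fin n ⊕ Unit → F) :=
  Submodule.map (Matrix.mulVecLin (Hmat a)) X

namespace HOrbitAux

variable {F : Type} [Field F] {n : ℕ}

/-- extension by zero as a linear map -/
def ext0 : (Fin n → F) →ₗ[F] (Fin n ⊕ Unit → F) where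
  toFun a := Sum.elim a 0
  map_add' a b := by funext x; cases x <;> simp
  map_smul' c a := by funext x; cases x <;> simp

lemma ext0_apply (a : Fin n → F) : (ext0 a : Fin n ⊕ Unit → F) = Sum.elim a 0 := rfl

lemma ext0_injective : Function.Injective (ext0 (F := F) (n := n)) := by
  intro a b h
  funext i
  exact congrFun h (Sum.inl i)

lemma Hmat_mulVecLin (a : Fin n → F) (v : Fin n ⊕ Unit → F) :
    (Hmat a).mulVecLin v = v + v (Sum.inr ()) • ext0 a := by
  funext x
  cases x with
  | inl i =>
    simp [Hmat, ext0_apply, Matrix.mulVec, dotProduct, Fintype.sum_sum_type,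
      Matrix.one_apply, ite_mul, mul_comm]
  | inr u =>
    cases u
    simp [Hmat, ext0_apply, Matrix.mulVec, dotProduct, Fintype.sum_sum_type,
      Matrix.one_apply]

lemma Hmat_mul (a b : Fin n → F) : Hmat a * Hmat b = Hmat (a + b) := by
  simp [Hmat, Matrix.fromBlocks_multiply]
  ext i u
  simp [Matrix.one_apply, add_comm]

lemma Hmat_zero : Hmat (0 : Fin n → F) = 1 := by
  have : (Matrix.of fun i (_ : Unit) => (0 : Fin n → F) i) = 0 := rfl
  rw [Hmat, this, Matrix.fromBlocks_one]

lemma actH_actH (a b : Fin n → F) (X : Submodule F (Fin n ⊕ Unit → F)) :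
    actH a (actH b X) = actH (a + b) X := by
  rw [actH, actH, actH, ← Submodule.map_comp, ← Matrix.mulVecLin_mul, Hmat_mul]

lemma actH_zero (X : Submodule F (Fin n ⊕ Unit → F)) : actH 0 X = X := by
  rw [actH, Hmat_zero]
  simp

local notation "Hyp" => LinearMap.ker (LinearMap.proj (R := F) (φ := fun _ : Fin n ⊕ Unit => F) (Sum.inr () : Fin n ⊕ Unit))

lemma mem_Hyp (v : Fin n ⊕ Unit → F) : v ∈ Hyp ↔ v (Sum.inr ()) = 0 := by
  simp [LinearMap.mem_ker]

lemma actH_inf_Hyp (a : Fin n → F) (X : Submodule F (Fin n ⊕ Unit → F)) :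
    actH a X ⊓ Hyp = X ⊓ Hyp := by
  ext w
  simp only [Submodule.mem_inf, actH, Submodule.mem_map, mem_Hyp]
  constructor
  · rintro ⟨⟨z, hz, rfl⟩, hH⟩
    rw [Hmat_mulVecLin] at hH ⊢
    have hze : z (Sum.inr ()) = 0 := by simpa [ext0_apply] using hH
    rw [hze, zero_smul, add_zero]
    exact ⟨hz, hze⟩
  · rintro ⟨hw, hH⟩
    refine ⟨⟨w, hw, ?_⟩, hH⟩
    rw [Hmat_mulVecLin, hH, zero_smul, add_zero]

lemma actH_not_le_Hyp (a : Fin n → F) (X : Submodule F (Fin n ⊕ Unit → F))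
    (hX : ¬ X ≤ Hyp) : ¬ actH a X ≤ Hyp := by
  obtain ⟨x, hx, hxH⟩ := SetLike.not_le_iff_exists.mp hX
  rw [mem_Hyp] at hxH
  apply SetLike.not_le_iff_exists.mpr
  refine ⟨(Hmat a).mulVecLin x, ⟨x, hx, rfl⟩, ?_⟩
  rw [mem_Hyp, Hmat_mulVecLin]
  simpa [ext0_apply] using hxH

lemma decomp (Z : Submodule F (Fin n ⊕ Unit → F)) (z : Fin n ⊕ Unit → F)
    (hz : z ∈ Z) (hze : z (Sum.inr ()) = 1) :
    (Z ⊓ Hyp) ⊔ Submodule.span F {z} = Z := by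
  apply le_antisymm
  · exact sup_le inf_le_left ((Submodule.span_singleton_le_iff_mem z Z).mpr hz)
  · intro w hw
    have h1 : w - w (Sum.inr ()) • z ∈ Z ⊓ Hyp := by
      refine ⟨Z.sub_mem hw (Z.smul_mem _ hz), ?_⟩
      simp [LinearMap.mem_ker, hze]
    have : w = (w - w (Sum.inr ()) • z) + w (Sum.inr ()) • z := by ring
    rw [this]
    exact Submodule.add_mem _ (Submodule.mem_sup_left h1)
      (Submodule.mem_sup_right (Submodule.smul_mem _ _ (Submodule.mem_span_singleton_self z)))

lemma map_inf_Hyp (a : Fin n → F) (X : Submodule F (Fin n ⊕ Unit → F)) :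
    Submodule.map ((Hmat a).mulVecLin) (X ⊓ Hyp) = X ⊓ Hyp := by
  apply le_antisymm
  · rintro _ ⟨z, hz, rfl⟩
    have hze : z (Sum.inr ()) = 0 := (mem_Hyp z).mp hz.2
    rw [Hmat_mulVecLin, hze, zero_smul, add_zero]
    exact hz
  · intro z hz
    have hze : z (Sum.inr ()) = 0 := (mem_Hyp z).mp hz.2
    exact ⟨z, hz, by rw [Hmat_mulVecLin, hze, zero_smul, add_zero]⟩

lemma actH_eq_self_iff (a : Fin n → F) (X : Submodule F (Fin n ⊕ Unit → F))
    (x : Fin n ⊕ Unit → F) (hx : x ∈ X) (hxe : x (Sum.inr ()) = 1) :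
    actH a X = X ↔ ext0 a ∈ X := by
  constructor
  · intro h
    have hTx : (Hmat a).mulVecLin x ∈ X := h ▸ ⟨x, hx, rfl⟩
    rw [Hmat_mulVecLin, hxe, one_smul] at hTx
    have := X.sub_mem hTx hx
    simpa using this
  · intro h
    have hle : ∀ b : Fin n → F, ext0 b ∈ X → actH b X ≤ X := by
      intro b hb
      rintro _ ⟨z, hz, rfl⟩
      rw [Hmat_mulVecLin]
      exact X.add_mem hz (X.smul_mem _ hb)
    have h1 : actH a X ≤ X := hle a h
    have h2 : actH (-a) X ≤ X := hle (-a) (by rw [map_neg]; exact X.neg_mem h)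
    have h3 : X = actH a (actH (-a) X) := by
      rw [actH_actH, add_neg_cancel, actH_zero]
    apply le_antisymm h1
    calc X = actH a (actH (-a) X) := h3
    _ ≤ actH a X := Submodule.map_mono h2

end HOrbitAux

open HOrbitAux in
/-- Under the action of `H(n+1, q)` on subspaces of `F_q^{n+1}`, the orbit of a subspace
`X ⊄ F_q^n` is exactly the set of subspaces `Y ⊄ F_q^n` with `Y ∩ F_q^n = X ∩ F_q^n`;
if `dim X = k`, the orbit has size `q^{n+1-k}`. -/
theorem H_orbit_eq_and_card (F : Type) [Field F] [Fintype F] (n k : ℕ)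
    (Hyp : Submodule F (Fin n ⊕ Unit → F))
    (hHyp : Hyp = LinearMap.ker (LinearMap.proj (R := F) (Sum.inr () : Fin n ⊕ Unit)))
    (X : Submodule F (Fin n ⊕ Unit → F)) (hX : ¬ X ≤ Hyp)
    (hk : Module.finrank F ↥X = k) :
    {Y | ∃ a : Fin n → F, Y = actH a X} =
        {Y : Submodule F (Fin n ⊕ Unit → F) | ¬ Y ≤ Hyp ∧ Y ⊓ Hyp = X ⊓ Hyp} ∧
      Nat.card {Y : Submodule F (Fin n ⊕ Unit → F) // ∃ a : Fin n → F, Y = actH a X} =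
        Fintype.card F ^ (n + 1 - k) := by
  subst hHyp
  -- a normalized vector x ∈ X with last coordinate 1
  obtain ⟨u, hu, huH⟩ := SetLike.not_le_iff_exists.mp hX
  rw [mem_Hyp] at huH
  set x := (u (Sum.inr ()))⁻¹ • u with hxdef
  have hx : x ∈ X := X.smul_mem _ hu
  have hxe : x (Sum.inr ()) = 1 := by
    simp [hxdef, inv_mul_cancel₀ huH]
  constructor
  · ext Y
    simp only [Set.mem_setOf_eq]
    constructor
    · rintro ⟨a, rfl⟩
      exact ⟨actH_not_le_Hyp a X hX, actH_inf_Hyp a X⟩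
    · rintro ⟨hY1, hY2⟩
      obtain ⟨v, hv, hvH⟩ := SetLike.not_le_iff_exists.mp hY1
      rw [mem_Hyp] at hvH
      set y := (v (Sum.inr ()))⁻¹ • v with hydef
      have hy : y ∈ Y := Y.smul_mem _ hv
      have hye : y (Sum.inr ()) = 1 := by
        simp [hydef, inv_mul_cancel₀ hvH]
      refine ⟨fun i => y (Sum.inl i) - x (Sum.inl i), ?_⟩
      have hTx : (Hmat fun i => y (Sum.inl i) - x (Sum.inl i)).mulVecLin x = y := by
        rw [Hmat_mulVecLin, hxe, one_smul]
        funext w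
        cases w with
        | inl i => simp [ext0_apply]
        | inr u => cases u; simp [ext0_apply, hxe, hye]
      rw [actH, ← decomp X x hx hxe, Submodule.map_sup, map_inf_Hyp, Submodule.map_span,
        Set.image_singleton, hTx, ← hY2, decomp Y y hy hye]
  · -- cardinality
    set W : Submodule F (Fin n → F) := X.comap ext0 with hW
    have hWmem : ∀ a : Fin n → F, a ∈ W ↔ ext0 a ∈ X := fun a => Iff.rfl
    have hiff : ∀ a b : Fin n → F, actH a X = actH b X ↔ a - b ∈ W := by
      intro a b
      constructor
      · intro h
        have : actH (a - b) X = X := by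
          have := congrArg (actH (-b)) h
          rw [actH_actH, actH_actH, neg_add_cancel, actH_zero, neg_add_eq_sub] at this
          exact this
        exact (actH_eq_self_iff (a - b) X x hx hxe).mp this
      · intro h
        have h2 : actH (a - b) X = X := (actH_eq_self_iff (a - b) X x hx hxe).mpr h
        have := congrArg (actH b) h2
        rw [actH_actH, add_sub_cancel] at this
        exact this
    -- the orbit is in bijection with the quotient by W
    let f : (Fin n → F) → {Y : Submodule F (Fin n ⊕ Unit → F) // ∃ a : Fin n → F, Y = actH a X} :=
      fun a => ⟨actH a X, a, rfl⟩
    have hf : ∀ a b : Fin n → F, Submodule.Quotient.mk (p := W) a = Submodule.Quotient.mk b → f a = f b := by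
      intro a b hab
      apply Subtype.ext
      exact (hiff a b).mpr ((Submodule.Quotient.eq W).mp hab)
    let φ : ((Fin n → F) ⧸ W) → {Y : Submodule F (Fin n ⊕ Unit → F) // ∃ a : Fin n → F, Y = actH a X} :=
      fun q => Quotient.liftOn' q f (fun a b hab => hf a b (Quotient.sound' hab))
    have hφ : Function.Bijective φ := by
      constructor
      · intro q1 q2
        induction q1 using Quotient.inductionOn' with
        | h a =>
        induction q2 using Quotient.inductionOn' with
        | h b =>
        intro h
        have : actH a X = actH b X := congrArg Subtype.val h
        exact (Submodule.Quotient.eq W).mpr ((hiff a b).mp this)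
      · rintro ⟨Y, a, rfl⟩
        exact ⟨Submodule.Quotient.mk a, rfl⟩
    rw [← Nat.card_congr (Equiv.ofBijective φ hφ)]
    -- now count the quotient
    have hcardW : Module.finrank F W = Module.finrank F ↥(X ⊓ LinearMap.ker (LinearMap.proj (R := F) (Sum.inr () : Fin n ⊕ Unit))) := by
      have hres : ∀ a ∈ W, ext0 a ∈ X ⊓ LinearMap.ker (LinearMap.proj (R := F) (Sum.inr () : Fin n ⊕ Unit)) := by
        intro a ha
        exact ⟨ha, by simp [LinearMap.mem_ker, ext0_apply]⟩
      have hbij : Function.Bijective (ext0.restrict hres) := by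
        constructor
        · rintro ⟨a, ha⟩ ⟨b, hb⟩ h
          exact Subtype.ext (ext0_injective (congrArg Subtype.val h))
        · rintro ⟨v, hvX, hvH⟩
          have hvH' : v (Sum.inr ()) = 0 := by simpa [LinearMap.mem_ker] using hvH
          have hev : ext0 (fun i => v (Sum.inl i)) = v := by
            funext w
            cases w with
            | inl i => rfl
            | inr u => cases u; simp [ext0_apply, hvH']
          refine ⟨⟨fun i => v (Sum.inl i), ?_⟩, ?_⟩
          · show ext0 _ ∈ X
            rw [hev]; exact hvX
          · apply Subtype.ext
            show ext0 _ = v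
            exact hev
      exact LinearEquiv.finrank_eq (LinearEquiv.ofBijective (ext0.restrict hres) hbij)
    have hfinX : Module.finrank F ↥(X ⊓ LinearMap.ker (LinearMap.proj (R := F) (Sum.inr () : Fin n ⊕ Unit))) + 1 = k := by
      have hx0 : x ≠ 0 := fun h => by simp [h] at hxe
      have hsum := Submodule.finrank_sup_add_finrank_inf_eq
        (X ⊓ LinearMap.ker (LinearMap.proj (R := F) (Sum.inr () : Fin n ⊕ Unit)))
        (Submodule.span F {x})
      rw [decomp X x hx hxe] at hsum
      have hinf : (X ⊓ LinearMap.ker (LinearMap.proj (R := F) (Sum.inr () : Fin n ⊕ Unit))) ⊓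
          Submodule.span F {x} = ⊥ := by
        rw [eq_bot_iff]
        rintro w ⟨⟨hwX, hwH⟩, hwsp⟩
        obtain ⟨c, rfl⟩ := Submodule.mem_span_singleton.mp hwsp
        have : c * x (Sum.inr ()) = 0 := by simpa [LinearMap.mem_ker] using hwH
        rw [hxe, mul_one] at this
        simp [this]
      rw [hinf, finrank_bot, add_zero, finrank_span_singleton hx0, hk] at hsum
      omega
    have hq : Module.finrank F ((Fin n → F) ⧸ W) + Module.finrank F W = n := by
      rw [Submodule.finrank_quotient_add_finrank, Module.finrank_pi]
      simp
    have : Module.finrank F ((Fin n → F) ⧸ W) = n + 1 - k := by omega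
    rw [← this]
    have hfin : Finite ((Fin n → F) ⧸ W) := Quotient.finite _
    cases nonempty_fintype ((Fin n → F) ⧸ W)
    rw [Nat.card_eq_fintype_card]
    exact Module.card_eq_pow_finrank (K := F)
end

section
/- Let g = [[I,a],[0,1]] ∈ H(n+1,q) with a ≠ 0, and let X be a subspace of F_q^{n+1} not contained in F_q^n. Then gX = X if and only if the vector (a,0) ∈ F_q^{n+1} lies in X ∩ F_q^n. Consequently g fixes either all elements of the orbit [X] or none. -/
lemma Hmat_apply {F : Type} [Field F] {n : ℕ} (a : Fin n → F) (v : Fin n ⊕ Unit → F) :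
    (Hmat a).mulVecLin v = v + (v (Sum.inr ())) • (Sum.elim a (fun _ => 0)) := by
  funext i
  cases i with
  | inl i =>
      simp [Hmat, Matrix.mulVecLin, Matrix.mulVec, Matrix.fromBlocks, dotProduct,
        Fintype.sum_sum_type, Matrix.one_apply, Finset.sum_ite_eq, mul_comm]
  | inr u =>
      cases u
      simp [Hmat, Matrix.mulVecLin, Matrix.mulVec, Matrix.fromBlocks, dotProduct,
        Fintype.sum_sum_type, Matrix.one_apply]

lemma key {F : Type} [Field F] {n : ℕ}
    (Hyp : Submodule F (Fin n ⊕ Unit → F))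
    (hHyp : Hyp = LinearMap.ker (LinearMap.proj (R := F) (Sum.inr () : Fin n ⊕ Unit)))
    (a : Fin n → F)
    (X : Submodule F (Fin n ⊕ Unit → F)) (hX : ¬ X ≤ Hyp) :
    actH a X = X ↔ (Sum.elim a (fun _ => 0) : Fin n ⊕ Unit → F) ∈ X ⊓ Hyp := by
  have hmemH : (Sum.elim a (fun _ => 0) : Fin n ⊕ Unit → F) ∈ Hyp := by
    simp [hHyp]
  obtain ⟨x, hxX, hxH⟩ : ∃ x ∈ X, x ∉ Hyp := by
    by_contra h; push_neg at h; exact hX h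
  have hxne : x (Sum.inr ()) ≠ 0 := by
    simpa [hHyp] using hxH
  constructor
  · intro h
    refine ⟨?_, hmemH⟩
    have hx' : (Hmat a).mulVecLin x ∈ X := h ▸ Submodule.mem_map_of_mem hxX
    rw [Hmat_apply] at hx'
    have : (x (Sum.inr ())) • (Sum.elim a (fun _ => 0) : Fin n ⊕ Unit → F) ∈ X := by
      simpa using X.sub_mem hx' hxX
    simpa [hxne] using X.smul_mem (x (Sum.inr ()))⁻¹ this
  · rintro ⟨haX, -⟩
    apply le_antisymm
    · rintro _ ⟨y, hyX, rfl⟩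
      rw [Hmat_apply]
      exact X.add_mem hyX (X.smul_mem _ haX)
    · intro y hyX
      refine ⟨y - (y (Sum.inr ())) • Sum.elim a (fun _ => 0),
        X.sub_mem hyX (X.smul_mem _ haX), ?_⟩
      rw [Hmat_apply]
      simp

/-- Let `g = [[I, a], [0, 1]] ∈ H(n+1, q)` with `a ≠ 0` and let `X ⊄ F_q^n` be a subspace
of `F_q^{n+1}`.  Then `gX = X` iff the vector `(a, 0)` lies in `X ∩ F_q^n`; consequently
`g` fixes either all elements of the orbit `[X]` or none. -/
theorem H_fixes_iff_vector_mem (F : Type) [Field F] [Fintype F] (n : ℕ)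
    (Hyp : Submodule F (Fin n ⊕ Unit → F))
    (hHyp : Hyp = LinearMap.ker (LinearMap.proj (R := F) (Sum.inr () : Fin n ⊕ Unit)))
    (a : Fin n → F) (ha : a ≠ 0)
    (X : Submodule F (Fin n ⊕ Unit → F)) (hX : ¬ X ≤ Hyp) :
    (actH a X = X ↔ (Sum.elim a (fun _ => 0) : Fin n ⊕ Unit → F) ∈ X ⊓ Hyp) ∧
    ((∀ Y : Submodule F (Fin n ⊕ Unit → F), (∃ b : Fin n → F, Y = actH b X) →
        actH a Y = Y) ∨
      (∀ Y : Submodule F (Fin n ⊕ Unit → F), (∃ b : Fin n → F, Y = actH b X) →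
        actH a Y ≠ Y)) := by
  have hmemH : ∀ c : Fin n → F, (Sum.elim c (fun _ => 0) : Fin n ⊕ Unit → F) ∈ Hyp := by
    intro c; simp [hHyp]
  -- Y not ≤ Hyp and (a,0)∈Y ↔ (a,0)∈X for Y = actH b X
  have hYnot : ∀ b : Fin n → F, ¬ actH b X ≤ Hyp := by
    intro b hle
    obtain ⟨x, hxX, hxH⟩ : ∃ x ∈ X, x ∉ Hyp := by
      by_contra h; push_neg at h; exact hX h
    apply hxH
    have := hle (Submodule.mem_map_of_mem (f := (Hmat b).mulVecLin) hxX)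
    rw [Hmat_apply] at this
    simp [hHyp] at this ⊢
    simpa using this
  have hmemY : ∀ b : Fin n → F,
      ((Sum.elim a (fun _ => 0) : Fin n ⊕ Unit → F) ∈ actH b X ↔
       (Sum.elim a (fun _ => 0) : Fin n ⊕ Unit → F) ∈ X) := by
    intro b
    constructor
    · rintro ⟨y, hyX, hy⟩
      rw [Hmat_apply] at hy
      have hy0 : y (Sum.inr ()) = 0 := by
        have := congrFun hy (Sum.inr ())
        simpa using this
      rw [hy0] at hy
      simp at hy
      rwa [← hy]
    · intro h
      refine ⟨_, h, ?_⟩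
      rw [Hmat_apply]; simp
  refine ⟨key Hyp hHyp a X hX, ?_⟩
  by_cases hmem : (Sum.elim a (fun _ => 0) : Fin n ⊕ Unit → F) ∈ X
  · left
    rintro Y ⟨b, rfl⟩
    exact (key Hyp hHyp a _ (hYnot b)).2 ⟨(hmemY b).2 hmem, hmemH a⟩
  · right
    rintro Y ⟨b, rfl⟩ hfix
    exact hmem ((hmemY b).1 ((key Hyp hHyp a _ (hYnot b)).1 hfix).1)
end

section
/- With θ_n defined by θ_n(X) = Σ{Y ⊆ F_q^{n+1} : Y ⊄ F_q^n, Y ∩ F_q^n = X}, one has θ_n(q·U_n(v)) = U_{n+1}(θ_n(v)) for all v in the span of subspaces of F_q^n; i.e., θ_n intertwines q·U_n with U_{n+1}. -/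
open scoped Classical

set_option synthInstance.maxHeartbeats 1000000 in
set_option maxHeartbeats 2000000 in
lemma dim_inf_hyp (F : Type) [Field F] [Fintype F] (n : ℕ)
    (Hyp : Submodule F (Fin (n + 1) → F))
    (hHyp : Hyp = LinearMap.ker (LinearMap.proj (R := F) (Fin.last n)))
    (W : Submodule F (Fin (n + 1) → F)) (hW : ¬ W ≤ Hyp) :
    Module.finrank F ↥(W ⊓ Hyp) + 1 = Module.finrank F ↥W := by
  subst hHyp
  set π : (Fin (n + 1) → F) →ₗ[F] F := LinearMap.proj (R := F) (Fin.last n) with hπ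
  set f : ↥W →ₗ[F] F := π ∘ₗ W.subtype with hf
  have hker : LinearMap.ker f = Submodule.comap W.subtype (W ⊓ LinearMap.ker π) := by
    ext x
    simp [hf, Submodule.mem_comap, LinearMap.mem_ker]
  have hfr : LinearMap.range f = ⊤ := by
    obtain ⟨w, hwW, hw⟩ := SetLike.not_le_iff_exists.mp hW
    have hπw : π w ≠ 0 := by simpa [LinearMap.mem_ker] using hw
    rw [eq_top_iff]
    intro x _
    refine ⟨(x * (π w)⁻¹) • ⟨w, hwW⟩, ?_⟩
    simp [hf, smul_eq_mul, mul_assoc, inv_mul_cancel₀ hπw]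
  have h1 := LinearMap.finrank_range_add_finrank_ker f
  rw [hfr, hker] at h1
  rw [finrank_top, Module.finrank_self] at h1
  have h2 : Module.finrank F ↥(Submodule.comap W.subtype (W ⊓ LinearMap.ker π))
      = Module.finrank F ↥(W ⊓ LinearMap.ker π) :=
    (Submodule.comapSubtypeEquivOfLe (inf_le_left (a := W) (b := LinearMap.ker π))).finrank_eq
  omega

/-- `θ_n` intertwines `q·U_n` with `U_{n+1}`: for every subspace `X` of the hyperplane
`Hyp ≅ F_q^n` of `F_q^{n+1}` one has `θ_n(q·U_n(X)) = U_{n+1}(θ_n(X))` in the permutation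
module on subspaces of `F_q^{n+1}` (and hence, by linearity, the same holds for every `v`
in the span of the subspaces of `F_q^n`).  Here `θ_n(X) = Σ {Y : Y ⊄ Hyp, Y ⊓ Hyp = X}`,
`U_n` is the up operator on subspaces of `Hyp` and `U_{n+1}` the up operator on subspaces
of `F_q^{n+1}`.  The identity is stated coefficientwise: for each subspace `T`, the
coefficient of `T` in `θ_n(q·U_n(X))` equals its coefficient in `U_{n+1}(θ_n(X))`. -/
theorem theta_intertwines (F : Type) [Field F] [Fintype F] (n : ℕ)
    (Hyp : Submodule F (Fin (n + 1) → F))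
    (hHyp : Hyp = LinearMap.ker (LinearMap.proj (R := F) (Fin.last n)))
    (X : Submodule F (Fin (n + 1) → F)) (hX : X ≤ Hyp) :
    ∀ T : Submodule F (Fin (n + 1) → F),
      Fintype.card F *
          Nat.card {Z : Submodule F (Fin (n + 1) → F) //
            (Z ≤ Hyp ∧ X < Z ∧ Module.finrank F ↥Z = Module.finrank F ↥X + 1) ∧
              ¬ T ≤ Hyp ∧ T ⊓ Hyp = Z} =
        Nat.card {Y : Submodule F (Fin (n + 1) → F) //
          (¬ Y ≤ Hyp ∧ Y ⊓ Hyp = X) ∧ Y < T ∧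
            Module.finrank F ↥T = Module.finrank F ↥Y + 1} := by
  intro T
  set π : (Fin (n + 1) → F) →ₗ[F] F := LinearMap.proj (R := F) (Fin.last n) with hπ
  by_cases hT : T ≤ Hyp
  · haveI hL : IsEmpty {Z : Submodule F (Fin (n + 1) → F) //
        (Z ≤ Hyp ∧ X < Z ∧ Module.finrank F ↥Z = Module.finrank F ↥X + 1) ∧
          ¬ T ≤ Hyp ∧ T ⊓ Hyp = Z} := by
      constructor; rintro ⟨Z, _, hT', _⟩; exact hT' hT
    haveI hR : IsEmpty {Y : Submodule F (Fin (n + 1) → F) //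
        (¬ Y ≤ Hyp ∧ Y ⊓ Hyp = X) ∧ Y < T ∧
          Module.finrank F ↥T = Module.finrank F ↥Y + 1} := by
      constructor; rintro ⟨Y, ⟨hY1, _⟩, hYT, _⟩
      exact hY1 (hYT.le.trans hT)
    rw [Nat.card_of_isEmpty, Nat.card_of_isEmpty, mul_zero]
  · -- T ⊄ Hyp
    have hdT : Module.finrank F ↥(T ⊓ Hyp) + 1 = Module.finrank F ↥T :=
      dim_inf_hyp F n Hyp hHyp T hT
    by_cases hc : X < T ⊓ Hyp ∧ Module.finrank F ↥(T ⊓ Hyp) = Module.finrank F ↥X + 1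
    · -- main case
      obtain ⟨hXZ, hdZ⟩ := hc
      -- LHS count = 1
      have e1 : Nat.card {Z : Submodule F (Fin (n + 1) → F) //
          (Z ≤ Hyp ∧ X < Z ∧ Module.finrank F ↥Z = Module.finrank F ↥X + 1) ∧
            ¬ T ≤ Hyp ∧ T ⊓ Hyp = Z} = 1 := by
        rw [Nat.card_eq_one_iff_unique]
        constructor
        · constructor
          rintro ⟨Z, _, _, hZ⟩ ⟨Z', _, _, hZ'⟩
          simp [← hZ, ← hZ']
        · exact ⟨⟨T ⊓ Hyp, ⟨inf_le_right, hXZ, hdZ⟩, hT, rfl⟩⟩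
      rw [e1, mul_one]
      -- RHS count = card F
      obtain ⟨t, htT, htH⟩ := SetLike.not_le_iff_exists.mp hT
      obtain ⟨z, hzZ, hzX⟩ := SetLike.not_le_iff_exists.mp (not_le_of_gt hXZ)
      have hzH : z ∈ Hyp := hzZ.2
      have hzT : z ∈ T := hzZ.1
      have hπt : π t ≠ 0 := by
        intro h; exact htH (by rw [hHyp]; simpa [LinearMap.mem_ker] using h)
      have hπz : π z = 0 := by
        have := hzH; rw [hHyp] at this; simpa [LinearMap.mem_ker] using this
      -- facts about Y_c := X ⊔ span (t + c • z)
      have key : ∀ c : F,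
          (¬ (X ⊔ F ∙ (t + c • z)) ≤ Hyp ∧ (X ⊔ F ∙ (t + c • z)) ⊓ Hyp = X) ∧
          (X ⊔ F ∙ (t + c • z)) < T ∧
          Module.finrank F ↥T = Module.finrank F ↥(X ⊔ F ∙ (t + c • z)) + 1 := by
        intro c
        set w : Fin (n + 1) → F := t + c • z with hw
        have hπw : π w ≠ 0 := by simp [hw, map_add, map_smul, hπz, hπt]
        have hwH : w ∉ Hyp := by
          intro h; rw [hHyp] at h; exact hπw (by simpa [LinearMap.mem_ker] using h)
        have hwT : w ∈ T := T.add_mem htT (T.smul_mem c hzT)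
        have hYH : ¬ (X ⊔ F ∙ w) ≤ Hyp := fun h =>
          hwH (h (le_sup_right (a := X) (b := F ∙ w) (Submodule.mem_span_singleton_self w)))
        have hinf : (X ⊔ F ∙ w) ⊓ Hyp = X := by
          apply le_antisymm
          · rintro v ⟨hv1, hv2⟩
            obtain ⟨x, hx, y, hy, rfl⟩ := Submodule.mem_sup.mp hv1
            obtain ⟨a, rfl⟩ := Submodule.mem_span_singleton.mp hy
            have hπv : π (x + a • w) = 0 := by
              rw [hHyp] at hv2; simpa [LinearMap.mem_ker] using hv2
            have hπx : π x = 0 := by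
              have := hX hx; rw [hHyp] at this; simpa [LinearMap.mem_ker] using this
            have ha : a = 0 := by
              rw [map_add, map_smul, hπx, zero_add, smul_eq_mul] at hπv
              exact (mul_eq_zero.mp hπv).resolve_right hπw
            simpa [ha] using hx
          · exact le_inf le_sup_left hX

        have hYT : (X ⊔ F ∙ w) ≤ T :=
          sup_le (hXZ.le.trans inf_le_left)
            ((Submodule.span_singleton_le_iff_mem w T).mpr hwT)
        have hYlt : (X ⊔ F ∙ w) < T := by
          refine lt_of_le_of_ne hYT ?_
          intro h
          apply hzX
          have hz' : z ∈ (X ⊔ F ∙ w) := by rw [h]; exact hzT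
          rw [← hinf]; exact ⟨hz', hzH⟩
        have hdY : Module.finrank F ↥((X ⊔ F ∙ w) ⊓ Hyp) + 1
            = Module.finrank F ↥(X ⊔ F ∙ w) :=
          dim_inf_hyp F n Hyp hHyp _ hYH
        rw [hinf] at hdY
        exact ⟨⟨hYH, hinf⟩, hYlt, by omega⟩
      set g : F → {Y : Submodule F (Fin (n + 1) → F) //
          (¬ Y ≤ Hyp ∧ Y ⊓ Hyp = X) ∧ Y < T ∧
            Module.finrank F ↥T = Module.finrank F ↥Y + 1} :=
        fun c => ⟨X ⊔ F ∙ (t + c • z), key c⟩ with hg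
      have hbij : Function.Bijective g := by
        constructor
        · intro c d h
          by_contra hcd
          have hEq : (X ⊔ F ∙ (t + c • z)) = (X ⊔ F ∙ (t + d • z)) :=
            congrArg Subtype.val h
          have hwc : (t + c • z) ∈ (X ⊔ F ∙ (t + d • z)) := by
            rw [← hEq]
            exact Submodule.mem_sup_right (Submodule.mem_span_singleton_self _)
          have hwd : (t + d • z) ∈ (X ⊔ F ∙ (t + d • z)) :=
            Submodule.mem_sup_right (Submodule.mem_span_singleton_self _)
          have hdiff : (c - d) • z ∈ (X ⊔ F ∙ (t + d • z)) := by
            have h5 := Submodule.sub_mem _ hwc hwd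
            have h6 : (t + c • z) - (t + d • z) = (c - d) • z := by module
            rwa [h6] at h5
          have hzY : z ∈ (X ⊔ F ∙ (t + d • z)) := by
            have h2 := Submodule.smul_mem _ (c - d)⁻¹ hdiff
            rwa [smul_smul, inv_mul_cancel₀ (sub_ne_zero.mpr hcd), one_smul] at h2
          apply hzX
          rw [← (key d).1.2]
          exact ⟨hzY, hzH⟩
        · rintro ⟨Y, ⟨hY1, hY2⟩, hYlt, hYd⟩
          have hXY : X ≤ Y := by rw [← hY2]; exact inf_le_left
          obtain ⟨y, hyY, hyH⟩ := SetLike.not_le_iff_exists.mp hY1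
          have hπy : π y ≠ 0 := by
            intro h; exact hyH (by rw [hHyp]; simpa [LinearMap.mem_ker] using h)
          set a : F := π y * (π t)⁻¹ with ha
          have ha0 : a ≠ 0 := mul_ne_zero hπy (inv_ne_zero hπt)
          have hy' : y - a • t ∈ T ⊓ Hyp := by
            constructor
            · exact T.sub_mem (hYlt.le hyY) (T.smul_mem a htT)
            · have h7 : π (y - a • t) = 0 := by
                rw [map_sub, map_smul, ha, smul_eq_mul, mul_assoc,
                  inv_mul_cancel₀ hπt, mul_one, sub_self]
              rw [hHyp]
              exact LinearMap.mem_ker.mpr h7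
          -- T ⊓ Hyp = X ⊔ F ∙ z
          have hz0 : z ≠ 0 := fun h => hzX (h ▸ X.zero_mem)
          have hinfz : X ⊓ (F ∙ z) = ⊥ := by
            rw [eq_bot_iff]
            rintro v ⟨hv1, hv2⟩
            obtain ⟨b, rfl⟩ := Submodule.mem_span_singleton.mp hv2
            rcases eq_or_ne b 0 with hb | hb
            · simp [hb]
            · exact absurd (by
                have := Submodule.smul_mem X b⁻¹ hv1
                rwa [smul_smul, inv_mul_cancel₀ hb, one_smul] at this) hzX
          have hrk : Module.finrank F ↥(X ⊔ F ∙ z) = Module.finrank F ↥X + 1 := by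
            have h3 := Submodule.finrank_sup_add_finrank_inf_eq X (F ∙ z)
            rw [hinfz, finrank_bot, finrank_span_singleton hz0] at h3
            omega
          have hZ0 : X ⊔ (F ∙ z) = T ⊓ Hyp := by
            apply Submodule.eq_of_le_of_finrank_eq
            · exact sup_le (le_inf (hXZ.le.trans inf_le_left) hX)
                ((Submodule.span_singleton_le_iff_mem z _).mpr hzZ)
            · rw [hrk, hdZ]
          rw [← hZ0] at hy'
          obtain ⟨x, hx, v, hv, hxv⟩ := Submodule.mem_sup.mp hy'
          obtain ⟨b, rfl⟩ := Submodule.mem_span_singleton.mp hv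
          set c : F := a⁻¹ * b with hc
          have hwY : t + c • z ∈ Y := by
            have heq : t + c • z = a⁻¹ • (y - x) := by
              have h8 : y = (x + b • z) + a • t := sub_eq_iff_eq_add.mp hxv.symm
              have h9 : y - x = a • t + b • z := by rw [h8]; abel
              rw [h9, smul_add, smul_smul, smul_smul, inv_mul_cancel₀ ha0, one_smul, hc]
            rw [heq]
            exact Y.smul_mem _ (Y.sub_mem hyY (hXY hx))
          have hle : (X ⊔ F ∙ (t + c • z)) ≤ Y :=
            sup_le hXY ((Submodule.span_singleton_le_iff_mem _ _).mpr hwY)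
          have hfr : Module.finrank F ↥(X ⊔ F ∙ (t + c • z)) = Module.finrank F ↥Y := by
            have h4 := (key c).2.2
            omega
          refine ⟨c, Subtype.ext ?_⟩
          exact Submodule.eq_of_le_of_finrank_eq hle hfr
      rw [← Nat.card_eq_of_bijective g hbij, Nat.card_eq_fintype_card]

    · -- degenerate case: both zero
      haveI hL : IsEmpty {Z : Submodule F (Fin (n + 1) → F) //
          (Z ≤ Hyp ∧ X < Z ∧ Module.finrank F ↥Z = Module.finrank F ↥X + 1) ∧
            ¬ T ≤ Hyp ∧ T ⊓ Hyp = Z} := by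
        constructor; rintro ⟨Z, ⟨_, h1, h2⟩, _, rfl⟩; exact hc ⟨h1, h2⟩
      haveI hR : IsEmpty {Y : Submodule F (Fin (n + 1) → F) //
          (¬ Y ≤ Hyp ∧ Y ⊓ Hyp = X) ∧ Y < T ∧
            Module.finrank F ↥T = Module.finrank F ↥Y + 1} := by
        constructor; rintro ⟨Y, ⟨hY1, hY2⟩, hYT, hYd⟩
        have hdY : Module.finrank F ↥(Y ⊓ Hyp) + 1 = Module.finrank F ↥Y :=
          dim_inf_hyp F n Hyp hHyp Y hY1
        rw [hY2] at hdY
        have hXle : X ≤ T ⊓ Hyp := by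
          rw [← hY2]; exact inf_le_inf_right Hyp hYT.le
        have hdeq : Module.finrank F ↥(T ⊓ Hyp) = Module.finrank F ↥X + 1 := by omega
        refine hc ⟨lt_of_le_of_ne hXle ?_, hdeq⟩
        intro h; rw [← h] at hdeq; omega
      rw [Nat.card_of_isEmpty, Nat.card_of_isEmpty, mul_zero]
end

section
/- With θ_n as above and the standard inner product on V(B_q(n+1)) (subspaces form an orthonormal basis), one has ⟨θ_n(w), θ_n(v)⟩ = q^{n−k}·⟨w, v⟩ for all w, v in the span of k-dimensional subspaces of F_q^n, 0 ≤ k ≤ n. In particular θ_n is injective. -/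
open scoped Classical

open Submodule

section Aux
variable (F : Type) [Field F] [Fintype F] (n : ℕ)

noncomputable abbrev eVec : Fin (n + 1) → F := Pi.single (Fin.last n) 1

variable {F n} (Hyp : Submodule F (Fin (n + 1) → F))
  (hmem : ∀ v : Fin (n + 1) → F, v ∈ Hyp ↔ v (Fin.last n) = 0)

include hmem

theorem sup_inf_hyp (X : Submodule F (Fin (n + 1) → F)) (hX : X ≤ Hyp) (u : Fin (n + 1) → F)
    (hu : u ∈ Hyp) : (X ⊔ span F {u + eVec F n}) ⊓ Hyp = X := by
  apply le_antisymm
  · rintro v ⟨hv1, hv2⟩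
    rcases mem_sup.1 hv1 with ⟨x, hx, y, hy, rfl⟩
    rcases mem_span_singleton.1 hy with ⟨c, rfl⟩
    have hx0 : x (Fin.last n) = 0 := (hmem x).1 (hX hx)
    have hu0 : u (Fin.last n) = 0 := (hmem u).1 hu
    have h0 : (x + c • (u + eVec F n)) (Fin.last n) = 0 := (hmem _).1 hv2
    have hc : c = 0 := by
      simpa [eVec, hx0, hu0] using h0
    simpa [hc] using hx
  · exact le_inf le_sup_left hX

theorem sup_not_le (X : Submodule F (Fin (n + 1) → F)) (u : Fin (n + 1) → F)
    (hu : u ∈ Hyp) : ¬ (X ⊔ span F {u + eVec F n}) ≤ Hyp := by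
  intro h
  have : u + eVec F n ∈ Hyp := h (le_sup_right (a := X) (mem_span_singleton_self _))
  have hu0 : u (Fin.last n) = 0 := (hmem u).1 hu
  have := (hmem _).1 this
  simp [eVec, hu0] at this

end Aux

section Aux2
variable {F : Type} [Field F] [Fintype F] {n : ℕ} (Hyp : Submodule F (Fin (n + 1) → F))
  (hmem : ∀ v : Fin (n + 1) → F, v ∈ Hyp ↔ v (Fin.last n) = 0)

include hmem

set_option linter.unusedSectionVars false

theorem eq_sup_span (X Y : Submodule F (Fin (n + 1) → F)) (hY2 : Y ⊓ Hyp = X)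
    (y : Fin (n + 1) → F) (hyY : y ∈ Y) (hy1 : y (Fin.last n) = 1) :
    Y = X ⊔ span F {y} := by
  apply le_antisymm
  · intro v hv
    have h1 : v - v (Fin.last n) • y ∈ Y := sub_mem hv (Y.smul_mem _ hyY)
    have h2 : v - v (Fin.last n) • y ∈ Hyp := by
      rw [hmem]; simp [hy1]
    exact mem_sup.2 ⟨_, hY2 ▸ mem_inf.2 ⟨h1, h2⟩, _, mem_span_singleton.2 ⟨v (Fin.last n), rfl⟩,
      by abel⟩
  · exact sup_le (hY2 ▸ inf_le_left) ((span_singleton_le_iff_mem _ _).2 hyY)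

theorem card_fiber (X : Submodule F (Fin (n + 1) → F)) (hX : X ≤ Hyp) :
    Nat.card {Y : Submodule F (Fin (n + 1) → F) // ¬ Y ≤ Hyp ∧ Y ⊓ Hyp = X} =
      Nat.card (Hyp ⧸ X.comap Hyp.subtype) := by
  have key : ∀ p q : Hyp, (p : Fin (n + 1) → F) - q ∈ X →
      X ⊔ span F {(p : Fin (n + 1) → F) + eVec F n} ≤
        X ⊔ span F {(q : Fin (n + 1) → F) + eVec F n} := by
    intro p q hpq
    rw [sup_le_iff]
    refine ⟨le_sup_left, (span_singleton_le_iff_mem _ _).2 ?_⟩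
    have h : ((p : Fin (n + 1) → F) + eVec F n) =
        ((p : Fin (n + 1) → F) - q) + ((q : Fin (n + 1) → F) + eVec F n) := by abel
    rw [h]
    exact add_mem (le_sup_left (b := span F {(q : Fin (n + 1) → F) + eVec F n}) hpq)
      (le_sup_right (a := X) (mem_span_singleton_self _))
  refine (Nat.card_eq_of_bijective (fun q => Quotient.liftOn' q
    (fun u : Hyp => (⟨X ⊔ span F {(u : Fin (n + 1) → F) + eVec F n},
        sup_not_le Hyp hmem X u u.2, sup_inf_hyp Hyp hmem X hX u u.2⟩ :
        {Y : Submodule F (Fin (n + 1) → F) // ¬ Y ≤ Hyp ∧ Y ⊓ Hyp = X}))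
    ?_) ⟨?_, ?_⟩).symm
  · -- well-defined
    intro a b hab
    have hab' : (a : Fin (n + 1) → F) - b ∈ X := by
      have := (Submodule.quotientRel_def _).1 hab
      simpa [Submodule.mem_comap] using this
    have hab'' : (b : Fin (n + 1) → F) - a ∈ X := by
      have := neg_mem hab'; simpa using this
    exact Subtype.ext (le_antisymm (key a b hab') (key b a hab''))
  · -- injective
    intro q1 q2 h
    induction q1 using Quotient.inductionOn'
    induction q2 using Quotient.inductionOn'
    rename_i a b
    have h' : X ⊔ span F {(a : Fin (n + 1) → F) + eVec F n} =
        X ⊔ span F {(b : Fin (n + 1) → F) + eVec F n} := congrArg Subtype.val h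
    apply Quotient.sound'
    rw [Submodule.quotientRel_def]
    have hmemab : (a : Fin (n + 1) → F) + eVec F n ∈
        X ⊔ span F {(b : Fin (n + 1) → F) + eVec F n} := by
      rw [← h']; exact le_sup_right (a := X) (mem_span_singleton_self _)
    rcases mem_sup.1 hmemab with ⟨x, hx, y, hy, hxy⟩
    rcases mem_span_singleton.1 hy with ⟨c, rfl⟩
    have ha0 : (a : Fin (n + 1) → F) (Fin.last n) = 0 := (hmem _).1 a.2
    have hb0 : (b : Fin (n + 1) → F) (Fin.last n) = 0 := (hmem _).1 b.2
    have hx0 : x (Fin.last n) = 0 := (hmem _).1 (hX hx)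
    have hc : c = 1 := by
      have := congrFun hxy (Fin.last n)
      have h1 : c = 1 := by simpa [eVec, ha0, hb0, hx0] using this
      exact h1
    subst hc
    rw [one_smul] at hxy
    have h4 : x + (b : Fin (n + 1) → F) + eVec F n = (a : Fin (n + 1) → F) + eVec F n := by
      rw [← hxy]; abel
    have h5 := add_right_cancel h4
    have hsub : (a : Fin (n + 1) → F) - b = x := by rw [← h5]; abel
    rw [Submodule.mem_comap]
    simpa [hsub] using hx
  · -- surjective
    rintro ⟨Y, hY1, hY2⟩
    rcases SetLike.not_le_iff_exists.1 hY1 with ⟨y, hyY, hyH⟩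
    have hy0 : y (Fin.last n) ≠ 0 := fun h => hyH ((hmem y).2 h)
    set y' : Fin (n + 1) → F := (y (Fin.last n))⁻¹ • y with hy'
    have hy'Y : y' ∈ Y := Y.smul_mem _ hyY
    have hy'1 : y' (Fin.last n) = 1 := by simp [hy', inv_mul_cancel₀ hy0]
    set u : Fin (n + 1) → F := y' - eVec F n with hu
    have huH : u ∈ Hyp := by rw [hmem]; simp [hu, hy'1, eVec]
    refine ⟨Submodule.Quotient.mk ⟨u, huH⟩, ?_⟩
    ext1
    show X ⊔ span F {u + eVec F n} = Y
    have h6 : u + eVec F n = y' := by rw [hu]; abel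
    rw [h6, ← eq_sup_span Hyp hmem X Y hY2 y' hy'Y hy'1]

end Aux2

set_option linter.unusedSectionVars false in
set_option synthInstance.maxHeartbeats 1000000 in
set_option maxHeartbeats 1000000 in
theorem quot_card {F : Type} [Field F] [Fintype F] {n k : ℕ} (hk : k ≤ n)
    (Hyp : Submodule F (Fin (n + 1) → F))
    (hmem : ∀ v : Fin (n + 1) → F, v ∈ Hyp ↔ v (Fin.last n) = 0)
    (hrankHyp : Module.finrank F Hyp = n)
    (X : Submodule F (Fin (n + 1) → F)) (hX : X ≤ Hyp)
    (hr : Module.finrank F X = k) :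
    Nat.card (Hyp ⧸ X.comap Hyp.subtype) = Fintype.card F ^ (n - k) := by
  have hX' : Module.finrank F (X.comap Hyp.subtype) = k := by
    rw [(Submodule.comapSubtypeEquivOfLe hX).finrank_eq, hr]
  have hq := Submodule.finrank_quotient_add_finrank (X.comap Hyp.subtype)
  rw [hX', hrankHyp] at hq
  have hrq : Module.finrank F (Hyp ⧸ X.comap Hyp.subtype) = n - k := by omega
  have : Fintype (Hyp ⧸ X.comap Hyp.subtype) := Fintype.ofFinite _
  rw [Nat.card_eq_fintype_card, Module.card_eq_pow_finrank (K := F), hrq]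

theorem rank_Hyp {F : Type} [Field F] [Fintype F] {n : ℕ} (Hyp : Submodule F (Fin (n + 1) → F))
    (hHyp : Hyp = LinearMap.ker (LinearMap.proj (R := F) (Fin.last n))) :
    Module.finrank F Hyp = n := by
  subst hHyp
  have hsurj : Function.Surjective
      (LinearMap.proj (R := F) (φ := fun _ : Fin (n + 1) => F) (Fin.last n)) := fun c =>
    ⟨Pi.single (Fin.last n) c, by simp⟩
  have h := LinearMap.finrank_range_add_finrank_ker
    (LinearMap.proj (R := F) (φ := fun _ : Fin (n + 1) => F) (Fin.last n))
  rw [LinearMap.range_eq_top.2 hsurj, finrank_top] at h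
  have h1 : Module.finrank F F = 1 := Module.finrank_self F
  have h2 : Module.finrank F (Fin (n + 1) → F) = n + 1 := Module.finrank_fin_fun F
  omega


/-- With the standard inner product on `V(B_q(n+1))` (subspaces orthonormal), the map
`θ_n(X) = Σ {Y : Y ⊄ Hyp, Y ⊓ Hyp = X}` satisfies
`⟨θ_n(X₁), θ_n(X₂)⟩ = q^{n-k} ⟨X₁, X₂⟩` for `k`-dimensional subspaces `X₁, X₂` of the
hyperplane `Hyp ≅ F_q^n`, `0 ≤ k ≤ n` (and hence for all `w, v` in the span of the
`k`-dimensional subspaces); in particular `θ_n` is injective.  The inner product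
`⟨θ_n(X₁), θ_n(X₂)⟩` is the number of `Y` with `Y ⊄ Hyp` and `Y ⊓ Hyp = X₁` as well as
`Y ⊓ Hyp = X₂`. -/
theorem theta_inner_product (F : Type) [Field F] [Fintype F] (n k : ℕ) (hk : k ≤ n)
    (Hyp : Submodule F (Fin (n + 1) → F))
    (hHyp : Hyp = LinearMap.ker (LinearMap.proj (R := F) (Fin.last n))) :
    (∀ X₁ X₂ : Submodule F (Fin (n + 1) → F), X₁ ≤ Hyp → X₂ ≤ Hyp →
      Module.finrank F ↥X₁ = k → Module.finrank F ↥X₂ = k →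
      (Nat.card {Y : Submodule F (Fin (n + 1) → F) //
          (¬ Y ≤ Hyp ∧ Y ⊓ Hyp = X₁) ∧ (¬ Y ≤ Hyp ∧ Y ⊓ Hyp = X₂)} : ℂ) =
        (Fintype.card F : ℂ) ^ (n - k) * (if X₁ = X₂ then 1 else 0)) ∧
    (∀ X₁ X₂ : Submodule F (Fin (n + 1) → F), X₁ ≤ Hyp → X₂ ≤ Hyp →
      {Y : Submodule F (Fin (n + 1) → F) | ¬ Y ≤ Hyp ∧ Y ⊓ Hyp = X₁} =
        {Y : Submodule F (Fin (n + 1) → F) | ¬ Y ≤ Hyp ∧ Y ⊓ Hyp = X₂} →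
      X₁ = X₂) := by
  have hmem : ∀ v : Fin (n + 1) → F, v ∈ Hyp ↔ v (Fin.last n) = 0 := by
    intro v; rw [hHyp, LinearMap.mem_ker, LinearMap.proj_apply]
  have hrankHyp : Module.finrank F Hyp = n := rank_Hyp Hyp hHyp
  constructor
  · intro X₁ X₂ h1 h2 hr1 hr2
    by_cases hEq : X₁ = X₂
    · subst hEq
      have e : {Y : Submodule F (Fin (n + 1) → F) //
            (¬ Y ≤ Hyp ∧ Y ⊓ Hyp = X₁) ∧ (¬ Y ≤ Hyp ∧ Y ⊓ Hyp = X₁)} ≃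
          {Y : Submodule F (Fin (n + 1) → F) // ¬ Y ≤ Hyp ∧ Y ⊓ Hyp = X₁} :=
        Equiv.subtypeEquivRight (by tauto)
      rw [Nat.card_congr e, card_fiber Hyp hmem X₁ h1, quot_card hk Hyp hmem hrankHyp X₁ h1 hr1]
      push_cast
      simp
    · have hE : IsEmpty {Y : Submodule F (Fin (n + 1) → F) //
          (¬ Y ≤ Hyp ∧ Y ⊓ Hyp = X₁) ∧ (¬ Y ≤ Hyp ∧ Y ⊓ Hyp = X₂)} := by
        exact ⟨fun Y => hEq (Y.2.1.2.symm.trans Y.2.2.2)⟩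
      rw [Nat.card_of_isEmpty]
      simp [hEq]
  · intro X₁ X₂ h1 h2 hset
    have h0 : (0 : Fin (n + 1) → F) ∈ Hyp := Hyp.zero_mem
    have hY : (X₁ ⊔ span F {(0 : Fin (n + 1) → F) + eVec F n}) ∈
        {Y : Submodule F (Fin (n + 1) → F) | ¬ Y ≤ Hyp ∧ Y ⊓ Hyp = X₁} :=
      ⟨sup_not_le Hyp hmem X₁ 0 h0, sup_inf_hyp Hyp hmem X₁ h1 0 h0⟩
    have hY2 := hset ▸ hY
    rw [← hY.2, hY2.2]
end
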